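/- Let (N_n)_{n ≥ 1} be a nondecreasing sequence of ℕ ∪ {∞}-valued random variables on a probability space with P(sup_n N_n = ∞) = α > 0. Then there exists a nondecreasing function g : ℕ → ℕ with g(n) → ∞ such that P(∀ n ≥ 1, N_n ≥ g(n)) ≥ α/2. -/

import Mathlib

open MeasureTheory
open scoped ENNReal

theorem stmt7 {Ω : Type*} [MeasurableSpace Ω] (P : Measure Ω) [IsProbabilityMeasure P]
    (N : ℕ → Ω → ℕ∞) (hNmeas : ∀ n, Measurable (N n))
    (hNmono : ∀ ω, Monotone fun n => N n ω)
    (α : ℝ) (hα : 0 < α)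
    (hsup : P {ω | (⨆ n, N n ω) = ⊤} = ENNReal.ofReal α) :
    ∃ g : ℕ → ℕ, Monotone g ∧ Filter.Tendsto g Filter.atTop Filter.atTop ∧
      ENNReal.ofReal (α / 2) ≤ P {ω | ∀ n, 1 ≤ n → (g n : ℕ∞) ≤ N n ω} := by
  classical
  set A : Set Ω := {ω | (⨆ n, N n ω) = ⊤} with hA
  set ε : ℕ → ℝ≥0∞ := fun k => ENNReal.ofReal α * 2⁻¹ ^ (k + 2) with hε
  have hoα_pos : (0 : ℝ≥0∞) < ENNReal.ofReal α := ENNReal.ofReal_pos.mpr hα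
  have hoα_ne_top : ENNReal.ofReal α ≠ ⊤ := ENNReal.ofReal_ne_top
  have hε_pos : ∀ k, ε k ≠ 0 := by
    intro k
    exact mul_ne_zero hoα_pos.ne' (pow_ne_zero _ (by norm_num))
  -- choice of indices m k
  have hchoice : ∀ k : ℕ, ∃ n : ℕ,
      ENNReal.ofReal α - ε k < P (A ∩ {ω | (k : ℕ∞) ≤ N n ω}) := by
    intro k
    set sk : ℕ → Set Ω := fun n => A ∩ {ω | (k : ℕ∞) ≤ N n ω} with hsk
    have hmono : Monotone sk := by
      intro a b hab ω hω
      exact ⟨hω.1, hω.2.trans (hNmono ω hab)⟩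
    have hunion : (⋃ n, sk n) = A := by
      apply Set.Subset.antisymm
      · exact Set.iUnion_subset fun n => Set.inter_subset_left
      · intro ω hω
        have hlt : (k : ℕ∞) < ⨆ n, N n ω := by
          rw [hω]
          exact lt_of_le_of_ne le_top (by simp)
        obtain ⟨n, hn⟩ := lt_iSup_iff.mp hlt
        exact Set.mem_iUnion.mpr ⟨n, hω, hn.le⟩
    have hmeasU : P A = ⨆ n, P (sk n) := by
      rw [← hunion]
      exact hmono.directed_le.measure_iUnion
    have hlt : ENNReal.ofReal α - ε k < ⨆ n, P (sk n) := by
      rw [← hmeasU, hA, hsup]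
      exact ENNReal.sub_lt_self hoα_ne_top hoα_pos.ne' (hε_pos k)
    exact lt_iSup_iff.mp hlt
  choose m hm using hchoice
  set D : ℕ → Set Ω := fun k => {ω | (k : ℕ∞) ≤ N (m k) ω} with hD
  have hDmeas : ∀ k, MeasurableSet (D k) := fun k =>
    hNmeas (m k) (MeasurableSet.of_discrete (s := {x : ℕ∞ | (k : ℕ∞) ≤ x}))
  -- bound P (A \ D k) ≤ ε k
  have hdiff : ∀ k, P (A \ D k) ≤ ε k := by
    intro k
    have heq : P (A ∩ D k) + P (A \ D k) = ENNReal.ofReal α := by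
      rw [measure_inter_add_diff A (hDmeas k), hA, hsup]
    have h1 : (ENNReal.ofReal α - ε k) + P (A \ D k)
        ≤ (ENNReal.ofReal α - ε k) + ε k := by
      calc (ENNReal.ofReal α - ε k) + P (A \ D k)
          ≤ P (A ∩ D k) + P (A \ D k) := add_le_add_left (hm k).le _
        _ = ENNReal.ofReal α := heq
        _ ≤ (ENNReal.ofReal α - ε k) + ε k := le_tsub_add
    exact (ENNReal.add_le_add_iff_left
      (ne_top_of_le_ne_top hoα_ne_top tsub_le_self)).mp h1
  -- the intersection event
  set S : Set Ω := ⋂ k, D k with hSdef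
  have hSmeas : MeasurableSet S := MeasurableSet.iInter hDmeas
  have hsum : ∑' k, ε k ≤ ENNReal.ofReal α * 2⁻¹ := by
    rw [hε, ENNReal.tsum_mul_left]
    apply mul_le_mul_right
    have : ∑' k : ℕ, (2⁻¹ : ℝ≥0∞) ^ (k + 2) = 2⁻¹ ^ 2 * ∑' k : ℕ, (2⁻¹ : ℝ≥0∞) ^ k := by
      rw [← ENNReal.tsum_mul_left]
      congr 1
      ext k
      rw [← pow_add]
      ring_nf
    rw [this, ENNReal.tsum_geometric]
    rw [show (1 : ℝ≥0∞) - 2⁻¹ = 2⁻¹ by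
      rw [← ENNReal.inv_two_add_inv_two]; simp [ENNReal.add_sub_cancel_right]]
    rw [inv_inv]
    have h22 : (2⁻¹ : ℝ≥0∞) ^ 2 * 2 = 2⁻¹ := by
      calc (2⁻¹ : ℝ≥0∞) ^ 2 * 2 = 2⁻¹ * (2⁻¹ * 2) := by ring
        _ = 2⁻¹ := by
            rw [ENNReal.inv_mul_cancel (by norm_num) (by norm_num), mul_one]
    rw [h22]
  have hAS : ENNReal.ofReal α * 2⁻¹ ≤ P (A ∩ S) := by
    have hdiffS : P (A \ S) ≤ ENNReal.ofReal α * 2⁻¹ := by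
      calc P (A \ S) = P (⋃ k, A \ D k) := by rw [hSdef, Set.diff_iInter]
        _ ≤ ∑' k, P (A \ D k) := measure_iUnion_le _
        _ ≤ ∑' k, ε k := ENNReal.tsum_le_tsum hdiff
        _ ≤ ENNReal.ofReal α * 2⁻¹ := hsum
    have heq : P (A ∩ S) + P (A \ S) = ENNReal.ofReal α := by
      rw [measure_inter_add_diff A hSmeas, hA, hsup]
    have h2 : ENNReal.ofReal α * 2⁻¹ + ENNReal.ofReal α * 2⁻¹
        ≤ P (A ∩ S) + ENNReal.ofReal α * 2⁻¹ := by
      calc ENNReal.ofReal α * 2⁻¹ + ENNReal.ofReal α * 2⁻¹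
          = ENNReal.ofReal α * (2⁻¹ + 2⁻¹) := by ring
        _ = ENNReal.ofReal α := by rw [ENNReal.inv_two_add_inv_two, mul_one]
        _ = P (A ∩ S) + P (A \ S) := heq.symm
        _ ≤ P (A ∩ S) + ENNReal.ofReal α * 2⁻¹ := add_le_add_right hdiffS _
    exact (ENNReal.add_le_add_iff_right
      (by finiteness)).mp h2
  -- define g
  refine ⟨fun n => Nat.findGreatest (fun j => m j ≤ n) n, ?_, ?_, ?_⟩
  · intro a b hab
    exact Nat.findGreatest_mono (fun j (h : m j ≤ a) => h.trans hab) hab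
  · rw [Filter.tendsto_atTop_atTop]
    intro b
    refine ⟨max b (m b), fun n hn => ?_⟩
    exact Nat.le_findGreatest ((le_max_left _ _).trans hn)
      ((le_max_right _ _).trans hn)
  · have hhalf : ENNReal.ofReal (α / 2) = ENNReal.ofReal α * 2⁻¹ := by
      rw [div_eq_mul_inv, ENNReal.ofReal_mul hα.le,
        ENNReal.ofReal_inv_of_pos two_pos, ENNReal.ofReal_ofNat]
    rw [hhalf]
    refine hAS.trans (measure_mono ?_)
    intro ω hω n _
    set k : ℕ := Nat.findGreatest (fun j => m j ≤ n) n with hk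
    show (k : ℕ∞) ≤ N n ω
    rcases Nat.eq_zero_or_pos k with h0 | hpos
    · rw [h0]
      simp
    · have hmk : m k ≤ n := (Nat.findGreatest_eq_iff.1 hk.symm).2.1 hpos.ne'
      have h1 : (k : ℕ∞) ≤ N (m k) ω := by
        have := hω.2
        rw [hSdef] at this
        exact Set.mem_iInter.mp this k
      exact h1.trans (hNmono ω hmk)
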